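/- Consider the linear periodic boundary value problem p'(t) + a(t) p(t) = −b(t) on [0,1] with p(0) = p(1), where 0 < g_min ≤ a(t) ≤ L₄ and |b(t)| ≤ L₃. Then the unique periodic solution satisfies |p(0)| ≤ L₃ e^{L₄}/(1 − e^{−g_min}) and |p(t)| ≤ L₃ e^{L₄}/(1 − e^{−g_min}) + L₃ e^{L₄} for all t ∈ [0,1]. -/

import Mathlib

open Real

/-- explicit bound for the linear periodic boundary value problem
p' + a p = -b, p(0) = p(1). -/
theorem stmt6
    (gmin L₃ L₄ : ℝ) (hgmin : 0 < gmin) (hL₃ : 0 < L₃) (hL₄ : 0 < L₄)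
    (a b p : ℝ → ℝ)
    (ha : ContinuousOn a (Set.Icc (0:ℝ) 1))
    (hb : ContinuousOn b (Set.Icc (0:ℝ) 1))
    (habd : ∀ t ∈ Set.Icc (0:ℝ) 1, gmin ≤ a t ∧ a t ≤ L₄)
    (hbbd : ∀ t ∈ Set.Icc (0:ℝ) 1, |b t| ≤ L₃)
    (hode : ∀ t ∈ Set.Icc (0:ℝ) 1, HasDerivAt p (-(b t) - a t * p t) t)
    (hper : p 0 = p 1) :
    |p 0| ≤ L₃ * Real.exp L₄ / (1 - Real.exp (-gmin)) ∧
      ∀ t ∈ Set.Icc (0:ℝ) 1,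
        |p t| ≤ L₃ * Real.exp L₄ / (1 - Real.exp (-gmin)) + L₃ * Real.exp L₄ := by
  -- clamp function
  set c : ℝ → ℝ := fun t => max 0 (min 1 t) with hc
  have hcmem : ∀ t, c t ∈ Set.Icc (0:ℝ) 1 := by
    intro t
    refine ⟨le_max_left _ _, ?_⟩
    exact max_le zero_le_one (min_le_left _ _)
  have hceq : ∀ t ∈ Set.Icc (0:ℝ) 1, c t = t := by
    intro t ht
    simp only [hc]
    rw [min_eq_right ht.2, max_eq_right ht.1]
  have hccont : Continuous c := continuous_const.max (continuous_const.min continuous_id)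
  set ta : ℝ → ℝ := fun t => a (c t) with hta_def
  set tb : ℝ → ℝ := fun t => b (c t) with htb_def
  have hta : Continuous ta := ha.comp_continuous hccont hcmem
  have htb : Continuous tb := hb.comp_continuous hccont hcmem
  have htabd : ∀ t, gmin ≤ ta t ∧ ta t ≤ L₄ := fun t => habd _ (hcmem t)
  have htbbd : ∀ t, |tb t| ≤ L₃ := fun t => hbbd _ (hcmem t)
  have htaeq : ∀ t ∈ Set.Icc (0:ℝ) 1, ta t = a t := fun t ht => by
    simp only [hta_def, hceq t ht]
  have htbeq : ∀ t ∈ Set.Icc (0:ℝ) 1, tb t = b t := fun t ht => by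
    simp only [htb_def, hceq t ht]
  set A : ℝ → ℝ := fun t => ∫ s in (0:ℝ)..t, ta s with hA_def
  have hAderiv : ∀ t, HasDerivAt A (ta t) t := by
    intro t
    exact intervalIntegral.integral_hasDerivAt_right (hta.intervalIntegrable _ _)
      (hta.stronglyMeasurableAtFilter _ _) hta.continuousAt
  have hAcont : Continuous A := by
    rw [continuous_iff_continuousAt]
    exact fun t => (hAderiv t).continuousAt
  have hA0 : A 0 = 0 := intervalIntegral.integral_same
  have hAmono : Monotone A := by
    apply StrictMono.monotone
    apply strictMono_of_deriv_pos
    intro t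
    rw [(hAderiv t).deriv]
    linarith [(htabd t).1]
  have hAnonneg : ∀ t, 0 ≤ t → 0 ≤ A t := fun t ht => hA0 ▸ hAmono ht
  have hAleL4 : ∀ t ∈ Set.Icc (0:ℝ) 1, A t ≤ L₄ := by
    intro t ht
    have h1 : A t ≤ A 1 := hAmono ht.2
    have h2 : A 1 ≤ L₄ := by
      have := intervalIntegral.integral_mono_on (μ := MeasureTheory.volume)
        (f := ta) (g := fun _ => L₄) zero_le_one (hta.intervalIntegrable _ _)
        (intervalIntegrable_const) (fun s _ => (htabd s).2)
      simpa using this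
    linarith
  have hA1g : gmin ≤ A 1 := by
    have := intervalIntegral.integral_mono_on (μ := MeasureTheory.volume)
      (f := fun _ => gmin) (g := ta) zero_le_one (intervalIntegrable_const)
      (hta.intervalIntegrable _ _) (fun s _ => (htabd s).1)
    simpa using this
  -- key integral identity
  have key : ∀ t ∈ Set.Icc (0:ℝ) 1,
      p t * Real.exp (A t) = p 0 - ∫ s in (0:ℝ)..t, tb s * Real.exp (A s) := by
    intro t ht
    have hder : ∀ s ∈ Set.uIcc (0:ℝ) t,
        HasDerivAt (fun u => p u * Real.exp (A u)) (-(tb s) * Real.exp (A s)) s := by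
      intro s hs
      rw [Set.uIcc_of_le ht.1] at hs
      have hs' : s ∈ Set.Icc (0:ℝ) 1 := ⟨hs.1, hs.2.trans ht.2⟩
      have h1 : HasDerivAt (fun u => p u * Real.exp (A u)) _ s := (hode s hs').mul ((hAderiv s).exp)
      convert h1 using 1
      rw [htbeq s hs', htaeq s hs']
      ring
    have hint : IntervalIntegrable (fun s => -(tb s) * Real.exp (A s))
        MeasureTheory.volume 0 t :=
      (htb.neg.mul (Real.continuous_exp.comp hAcont)).intervalIntegrable _ _
    have heq := intervalIntegral.integral_eq_sub_of_hasDerivAt hder hint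
    have hneg : (∫ s in (0:ℝ)..t, -(tb s) * Real.exp (A s))
        = -∫ s in (0:ℝ)..t, tb s * Real.exp (A s) := by
      rw [← intervalIntegral.integral_neg]
      congr 1; ext s; ring
    rw [hneg, hA0, Real.exp_zero, mul_one] at heq
    linarith
  -- uniform bound on the integral
  have hIbd : ∀ t ∈ Set.Icc (0:ℝ) 1,
      |∫ s in (0:ℝ)..t, tb s * Real.exp (A s)| ≤ L₃ * Real.exp L₄ := by
    intro t ht
    have hbd : ∀ x ∈ Set.uIoc (0:ℝ) t, ‖tb x * Real.exp (A x)‖ ≤ L₃ * Real.exp L₄ := by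
      intro x hx
      rw [Set.uIoc_of_le ht.1] at hx
      have hx' : x ∈ Set.Icc (0:ℝ) 1 := ⟨hx.1.le, hx.2.trans ht.2⟩
      rw [Real.norm_eq_abs, abs_mul, abs_of_pos (Real.exp_pos _)]
      exact mul_le_mul (htbbd x) (Real.exp_le_exp.2 (hAleL4 x hx')) (Real.exp_pos _).le
        hL₃.le
    have h := intervalIntegral.norm_integral_le_of_norm_le_const hbd
    rw [Real.norm_eq_abs] at h
    have ht1 : |t - 0| ≤ 1 := by
      rw [abs_of_nonneg (by linarith [ht.1])]
      linarith [ht.2]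
    have hC : 0 ≤ L₃ * Real.exp L₄ := by positivity
    nlinarith
  -- bound on |p 0|
  have hexpA1 : Real.exp gmin ≤ Real.exp (A 1) := Real.exp_le_exp.2 hA1g
  have hgt1 : (1:ℝ) < Real.exp gmin := by simpa using Real.exp_lt_exp.2 hgmin
  have hd : 0 < 1 - Real.exp (-gmin) := by
    have : Real.exp (-gmin) < 1 := Real.exp_lt_one_iff.2 (by linarith)
    linarith
  have hp0eq : p 0 * (Real.exp (A 1) - 1) = -∫ s in (0:ℝ)..1, tb s * Real.exp (A s) := by
    have h := key 1 (by norm_num)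
    rw [← hper] at h
    linarith [h]
  have h1 : |p 0| * (Real.exp (A 1) - 1) ≤ L₃ * Real.exp L₄ := by
    have habs : |p 0| * (Real.exp (A 1) - 1) = |p 0 * (Real.exp (A 1) - 1)| := by
      rw [abs_mul, abs_of_nonneg (by linarith : (0:ℝ) ≤ Real.exp (A 1) - 1)]
    rw [habs, hp0eq, abs_neg]
    exact hIbd 1 (by norm_num)
  have h2 : 1 - Real.exp (-gmin) ≤ Real.exp (A 1) - 1 := by
    have hmul : Real.exp (-gmin) * Real.exp gmin = 1 := by
      rw [← Real.exp_add]; simp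
    nlinarith [Real.exp_pos gmin, sq_nonneg (Real.exp gmin - 1)]
  have hp0 : |p 0| ≤ L₃ * Real.exp L₄ / (1 - Real.exp (-gmin)) := by
    rw [le_div_iff₀ hd]
    nlinarith [abs_nonneg (p 0)]
  refine ⟨hp0, ?_⟩
  intro t ht
  have hAt1 : (1:ℝ) ≤ Real.exp (A t) := Real.one_le_exp (hAnonneg t ht.1)
  have hpt : |p t| ≤ |p t| * Real.exp (A t) := by
    nlinarith [abs_nonneg (p t)]
  have hpt2 : |p t| * Real.exp (A t) = |p t * Real.exp (A t)| := by
    rw [abs_mul, abs_of_pos (Real.exp_pos _)]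
  have hpt3 : |p t * Real.exp (A t)| ≤ |p 0| + L₃ * Real.exp L₄ := by
    rw [key t ht]
    calc |p 0 - ∫ s in (0:ℝ)..t, tb s * Real.exp (A s)|
        ≤ |p 0| + |∫ s in (0:ℝ)..t, tb s * Real.exp (A s)| := abs_sub _ _
      _ ≤ |p 0| + L₃ * Real.exp L₄ := by linarith [hIbd t ht]
  linarith
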